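/- Let χ₁ be the unique positive radial H¹(ℝ³) solution of -Δχ₁ + χ₁ = χ₁^p with 1 < p. Suppose |x| χ₁(|x|) ≤ C e^{-δ₀ |x|} for some δ₀ > 0 with δ₀ p possibly < 1. Then from the representation χ₁(|x|) = (c/|x|)(K₁(χ₁^p)(|x|) + K₂(χ₁^p)(|x|)) with K₁(F)(R) = ∫₀^R e^{-R} sinh(λ) F(λ) λ dλ and K₂(F)(R) = ∫_R^∞ sinh(R) e^{-λ} F(λ) λ dλ, one obtains |x| χ₁(|x|) ≤ C e^{-B|x|} with B = min(1, δ₀ p); iterating, r χ₁(r) = C₀ e^{-r} + O(e^{-(p-δ)r}) for r > 1, for any δ > 0 and some C₀ > 0. -/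

import Mathlib

open MeasureTheory Set Filter Topology Asymptotics intervalIntegral

lemma myIntExp {a : ℝ} (ha : 0 < a) (r : ℝ) :
    ∫ x in Ioi r, Real.exp (-a * x) = Real.exp (-a * r) / a := by
  have h := integral_Ioi_of_hasDerivAt_of_tendsto
    (f := fun x => -Real.exp (-a * x) / a) (f' := fun x => Real.exp (-a * x)) (a := r)
    (m := 0) ?_ ?_ (exp_neg_integrableOn_Ioi r ha) ?_
  · rw [h]; ring
  · exact (((Real.continuous_exp.comp (continuous_const.mul continuous_id)).neg.div_const
      a).continuousWithinAt)
  · intro x _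
    have : HasDerivAt (fun x : ℝ => -a * x) (-a) x := by
      simpa using (hasDerivAt_id x).const_mul (-a)
    have := (this.exp.neg.div_const a)
    refine this.congr_deriv ?_
    field_simp
  · have : Tendsto (fun x : ℝ => -Real.exp (-a * x) / a) atTop (𝓝 (-0 / a)) := by
      refine Tendsto.div_const (Tendsto.neg ?_) _
      exact Real.tendsto_exp_atBot.comp (tendsto_id.const_mul_atTop_of_neg (by linarith))
    simpa using this

lemma myKb (χ₁ : ℝ → ℝ) (p C δ : ℝ) (hp : 1 ≤ p)
    (hχpos : ∀ r ≥ (0:ℝ), 0 < χ₁ r)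
    (hC : ∀ r > (0:ℝ), r * χ₁ r ≤ C * Real.exp (-δ * r))
    (l : ℝ) (hl : 1 ≤ l) : χ₁ l ^ p * l ≤ C ^ p * Real.exp (-(δ * p) * l) := by
  have hl0 : (0:ℝ) ≤ l := by linarith
  have hpos := hχpos l hl0
  have h1 : l * χ₁ l ≤ C * Real.exp (-δ * l) := hC l (by linarith)
  have h2 : χ₁ l ≤ C * Real.exp (-δ * l) :=
    le_trans (le_mul_of_one_le_left hpos.le hl) h1
  have hCE : 0 < C * Real.exp (-δ * l) := lt_of_lt_of_le hpos h2
  have hC0 : 0 < C := by nlinarith [Real.exp_pos (-δ * l)]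
  have e1 : χ₁ l ^ p = χ₁ l ^ (p - 1) * χ₁ l := by
    rw [← Real.rpow_add_one hpos.ne' (p - 1)]; norm_num
  calc χ₁ l ^ p * l = χ₁ l ^ (p - 1) * (l * χ₁ l) := by rw [e1]; ring
    _ ≤ (C * Real.exp (-δ * l)) ^ (p - 1) * (C * Real.exp (-δ * l)) := by
        apply mul_le_mul (Real.rpow_le_rpow hpos.le h2 (by linarith)) h1
          (by positivity) (by positivity)
    _ = (C * Real.exp (-δ * l)) ^ p := by
        rw [← Real.rpow_add_one hCE.ne' (p - 1)]; norm_num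
    _ = C ^ p * Real.exp (-(δ * p) * l) := by
        rw [Real.mul_rpow hC0.le (Real.exp_pos _).le, ← Real.exp_mul]
        congr 2; ring

lemma myTail (χ₁ : ℝ → ℝ) (p C δ : ℝ) (hp : 1 ≤ p) (hδ : 0 < δ)
    (hχpos : ∀ r ≥ (0:ℝ), 0 < χ₁ r)
    (hC : ∀ r > (0:ℝ), r * χ₁ r ≤ C * Real.exp (-δ * r))
    (hC0 : 0 < C) (r : ℝ) (hr : 1 ≤ r) :
    (∫ l in Ioi r, Real.exp (-l) * (χ₁ l ^ p * l))
      ≤ C ^ p * (Real.exp (-(1 + δ * p) * r) / (1 + δ * p)) := by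
  have hint : Integrable (fun l => C ^ p * Real.exp (-(1 + δ * p) * l))
      (volume.restrict (Ioi r)) := (exp_neg_integrableOn_Ioi r (by positivity)).const_mul _
  have hmono := integral_mono_of_nonneg (μ := volume.restrict (Ioi r))
    (f := fun l => Real.exp (-l) * (χ₁ l ^ p * l))
    (g := fun l => C ^ p * Real.exp (-(1 + δ * p) * l)) ?_ hint ?_
  · calc (∫ l in Ioi r, Real.exp (-l) * (χ₁ l ^ p * l))
        ≤ ∫ l in Ioi r, C ^ p * Real.exp (-(1 + δ * p) * l) := hmono
      _ = C ^ p * (Real.exp (-(1 + δ * p) * r) / (1 + δ * p)) := by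
          rw [MeasureTheory.integral_const_mul, myIntExp (by positivity)]
  · filter_upwards [ae_restrict_mem measurableSet_Ioi] with l hl
    have hl0 : (0:ℝ) ≤ l := by simp only [mem_Ioi] at hl; linarith
    have := hχpos l hl0
    simp only [Pi.zero_apply]
    positivity
  · filter_upwards [ae_restrict_mem measurableSet_Ioi] with l hl
    simp only [mem_Ioi] at hl
    have hl1 : 1 ≤ l := by linarith
    calc Real.exp (-l) * (χ₁ l ^ p * l)
        ≤ Real.exp (-l) * (C ^ p * Real.exp (-(δ * p) * l)) :=
          mul_le_mul_of_nonneg_left (myKb χ₁ p C δ hp hχpos hC l hl1) (Real.exp_pos _).le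
      _ = C ^ p * Real.exp (-(1 + δ * p) * l) := by
          rw [show Real.exp (-l) * (C ^ p * Real.exp (-(δ * p) * l))
            = C ^ p * (Real.exp (-l) * Real.exp (-(δ * p) * l)) from by ring, ← Real.exp_add]
          congr 2; ring

set_option maxHeartbeats 1000000 in
lemma myStep (χ₁ : ℝ → ℝ) (p c Cb : ℝ)
    (hp : 1 < p) (hc : 0 < c)
    (hχc : ContinuousOn χ₁ (Ici 0)) (hχpos : ∀ r ≥ (0:ℝ), 0 < χ₁ r)
    (hχbd : ∀ r ≥ (0:ℝ), χ₁ r ≤ Cb)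
    (hrep : ∀ r > (0:ℝ), χ₁ r = c / r *
      ((∫ lam in (0:ℝ)..r, Real.exp (-r) * Real.sinh lam * (χ₁ lam ^ p) * lam)
        + ∫ lam in Ioi r, Real.sinh r * Real.exp (-lam) * (χ₁ lam ^ p) * lam))
    {δ C : ℝ} (hδ : 0 < δ) (hC : ∀ r > (0:ℝ), r * χ₁ r ≤ C * Real.exp (-δ * r)) :
    ∃ C', ∀ r > (0:ℝ), r * χ₁ r ≤ C' * Real.exp (-(min 1 (δ * ((1 + p) / 2))) * r) := by
  set q : ℝ := (1 + p) / 2 with hqdef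
  have hq1 : 1 < q := by rw [hqdef]; linarith
  have hqp : q < p := by rw [hqdef]; linarith
  set B : ℝ := min 1 (δ * q) with hBdef
  have hB0 : 0 < B := lt_min one_pos (by positivity)
  have hB1 : B ≤ 1 := min_le_left _ _
  have hBq : B ≤ δ * q := min_le_right _ _
  have hBp : B < δ * p := lt_of_le_of_lt hBq (by nlinarith)
  have hC0 : 0 < C := by
    have h1 := hC 1 one_pos
    have h2 := hχpos 1 zero_le_one
    nlinarith [Real.exp_pos (-δ * 1)]
  have hCb0 : 0 < Cb := lt_of_lt_of_le (hχpos 0 le_rfl) (hχbd 0 le_rfl)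
  -- continuity of the integrands
  have hFc : ContinuousOn (fun l => χ₁ l ^ p) (Ici 0) :=
    hχc.rpow_const (fun x hx => Or.inl (hχpos x hx).ne')
  have hgc : ContinuousOn (fun l => Real.sinh l * (χ₁ l ^ p * l)) (Ici 0) :=
    Real.continuous_sinh.continuousOn.mul (hFc.mul continuous_id.continuousOn)
  have hgint : ∀ a b : ℝ, 0 ≤ a → a ≤ b →
      IntervalIntegrable (fun l => Real.sinh l * (χ₁ l ^ p * l)) volume a b := by
    intro a b ha hab
    apply (hgc.mono ?_).intervalIntegrable
    rw [uIcc_of_le hab]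
    exact fun x hx => ha.trans hx.1
  have hI2 : ∀ r : ℝ, 1 ≤ r → (∫ l in Ioi r, Real.exp (-l) * (χ₁ l ^ p * l))
      ≤ C ^ p * (Real.exp (-(1 + δ * p) * r) / (1 + δ * p)) :=
    fun r hr => myTail χ₁ p C δ hp.le hδ hχpos hC hC0 r hr
  -- the middle integral bound
  have hT : ∃ K : ℝ, 0 ≤ K ∧ ∀ r : ℝ, 1 ≤ r →
      Real.exp (-r) * ∫ l in (1:ℝ)..r, Real.exp ((1 - δ * p) * l) ≤ K * Real.exp (-B * r) := by
    rcases lt_or_ge (δ * q) 1 with hA | hA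
    · -- B = δ q < 1
      have hBeq : B = δ * q := min_eq_right hA.le
      set M : ℝ := min 1 (δ * p) with hMdef
      have hM0 : 0 < M := lt_min one_pos (by positivity)
      have hM1 : M ≤ 1 := min_le_left _ _
      have hBM : B < M := lt_min (by rw [hBeq]; exact hA) hBp
      set ε : ℝ := M - B with hεdef
      have hε0 : 0 < ε := by simp only [hεdef]; linarith
      refine ⟨1 / ε, by positivity, fun r hr => ?_⟩
      have hr0 : (0:ℝ) < r := by linarith
      have hmono : (∫ l in (1:ℝ)..r, Real.exp ((1 - δ * p) * l))
          ≤ ∫ l in (1:ℝ)..r, Real.exp ((1 - M) * r) := by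
        apply intervalIntegral.integral_mono_on hr
          ((Real.continuous_exp.comp (continuous_const.mul continuous_id)).intervalIntegrable 1 r)
          intervalIntegrable_const
        intro x hx
        show Real.exp ((1 - δ * p) * x) ≤ Real.exp ((1 - M) * r)
        apply Real.exp_le_exp.2
        show (1 - δ * p) * x ≤ _
        rcases le_total (δ * p) 1 with h | h
        · rw [hMdef, min_eq_right h]
          exact mul_le_mul_of_nonneg_left hx.2 (by linarith)
        · rw [hMdef, min_eq_left h]
          nlinarith [hx.1, mul_nonneg (sub_nonneg.2 hx.1) (sub_nonneg.2 h)]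
      have hconst : (∫ l in (1:ℝ)..r, Real.exp ((1 - M) * r)) = (r - 1) * Real.exp ((1 - M) * r) := by
        simp [intervalIntegral.integral_const, smul_eq_mul]
      have hr1 : r - 1 ≤ Real.exp (ε * r) / ε := by
        rw [le_div_iff₀ hε0]
        nlinarith [Real.add_one_le_exp (ε * r)]
      have hE : Real.exp (ε * r) / ε * Real.exp ((1 - M) * r) * Real.exp (-r)
          = 1 / ε * Real.exp (-B * r) := by
        rw [show Real.exp (ε * r) / ε * Real.exp ((1 - M) * r) * Real.exp (-r)
          = 1 / ε * (Real.exp (ε * r) * Real.exp ((1 - M) * r) * Real.exp (-r)) from by ring,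
          ← Real.exp_add, ← Real.exp_add]
        congr 2
        rw [hεdef]; ring
      calc Real.exp (-r) * ∫ l in (1:ℝ)..r, Real.exp ((1 - δ * p) * l)
          ≤ Real.exp (-r) * ((r - 1) * Real.exp ((1 - M) * r)) := by
            apply mul_le_mul_of_nonneg_left (hmono.trans hconst.le) (Real.exp_pos _).le
        _ ≤ Real.exp (-r) * (Real.exp (ε * r) / ε * Real.exp ((1 - M) * r)) := by
            apply mul_le_mul_of_nonneg_left
              (mul_le_mul_of_nonneg_right hr1 (Real.exp_pos _).le) (Real.exp_pos _).le
        _ = 1 / ε * Real.exp (-B * r) := by rw [← hE]; ring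
    · -- B = 1, δ p > δ q ≥ 1 strictly
      have hBeq : B = 1 := min_eq_left hA
      have hδp1 : 1 < δ * p := lt_of_le_of_lt hA (by nlinarith)
      have ha0 : 0 < δ * p - 1 := by linarith
      refine ⟨Real.exp (-(δ * p - 1)) / (δ * p - 1), by positivity, fun r hr => ?_⟩
      have hfe : (fun l : ℝ => Real.exp ((1 - δ * p) * l))
          = fun l => Real.exp (-(δ * p - 1) * l) := by
        funext l; congr 1; ring
      have hIval : (∫ l in Ioi (1:ℝ), Real.exp ((1 - δ * p) * l))
          = Real.exp (-(δ * p - 1)) / (δ * p - 1) := by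
        rw [hfe, myIntExp ha0]
        norm_num
      have hIint : IntegrableOn (fun l : ℝ => Real.exp ((1 - δ * p) * l)) (Ioi 1) := by
        rw [hfe]; exact exp_neg_integrableOn_Ioi 1 ha0
      have hset : (∫ l in (1:ℝ)..r, Real.exp ((1 - δ * p) * l))
          ≤ Real.exp (-(δ * p - 1)) / (δ * p - 1) := by
        rw [intervalIntegral.integral_of_le hr, ← hIval]
        apply setIntegral_mono_set hIint
          (ae_of_all _ fun l => (Real.exp_pos _).le)
          (HasSubset.Subset.eventuallyLE Ioc_subset_Ioi_self)
      calc Real.exp (-r) * ∫ l in (1:ℝ)..r, Real.exp ((1 - δ * p) * l)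
          ≤ Real.exp (-r) * (Real.exp (-(δ * p - 1)) / (δ * p - 1)) :=
            mul_le_mul_of_nonneg_left hset (Real.exp_pos _).le
        _ = Real.exp (-(δ * p - 1)) / (δ * p - 1) * Real.exp (-B * r) := by
            rw [hBeq]; ring_nf
  obtain ⟨K, hK0, hTK⟩ := hT
  refine ⟨c * (Real.sinh 1 * Cb ^ p + C ^ p / 2 * K + C ^ p / 2) + Cb * Real.exp 1,
    fun r hr => ?_⟩
  have hKp0 : (0:ℝ) ≤ C ^ p / 2 := by positivity
  rcases lt_or_ge r 1 with hr1 | hr1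
  · -- small r : trivial bound
    have h1 : r * χ₁ r ≤ Cb := by nlinarith [hχpos r hr.le, hχbd r hr.le]
    have he : Real.exp 1 * Real.exp (-B * r) = Real.exp (1 - B * r) := by
      rw [← Real.exp_add]; ring_nf
    have h3 : (1:ℝ) ≤ Real.exp (1 - B * r) := Real.one_le_exp (by nlinarith)
    have h2 : Cb ≤ Cb * Real.exp 1 * Real.exp (-B * r) := by nlinarith [Real.exp_pos (-B * r)]
    have h4 : (0:ℝ) ≤ c * (Real.sinh 1 * Cb ^ p + C ^ p / 2 * K + C ^ p / 2)
        * Real.exp (-B * r) := by positivity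
    nlinarith [h1, h2, h4]
  · -- main case r ≥ 1
    have hr0 : (0:ℝ) ≤ r := by linarith
    have e1 : (∫ lam in (0:ℝ)..r, Real.exp (-r) * Real.sinh lam * (χ₁ lam ^ p) * lam)
        = Real.exp (-r) * ∫ l in (0:ℝ)..r, Real.sinh l * (χ₁ l ^ p * l) := by
      simp only [mul_assoc]
      exact intervalIntegral.integral_const_mul _ _
    have e2 : (∫ lam in Ioi r, Real.sinh r * Real.exp (-lam) * (χ₁ lam ^ p) * lam)
        = Real.sinh r * ∫ l in Ioi r, Real.exp (-l) * (χ₁ l ^ p * l) := by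
      simp only [mul_assoc]
      exact MeasureTheory.integral_const_mul _ _
    have hrw : r * χ₁ r = c * (Real.exp (-r) * (∫ l in (0:ℝ)..r, Real.sinh l * (χ₁ l ^ p * l))
        + Real.sinh r * ∫ l in Ioi r, Real.exp (-l) * (χ₁ l ^ p * l)) := by
      rw [hrep r hr, e1, e2]
      field_simp
    have hsplit : (∫ l in (0:ℝ)..r, Real.sinh l * (χ₁ l ^ p * l))
        = (∫ l in (0:ℝ)..(1:ℝ), Real.sinh l * (χ₁ l ^ p * l))
          + ∫ l in (1:ℝ)..r, Real.sinh l * (χ₁ l ^ p * l) :=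
      (integral_add_adjacent_intervals (hgint 0 1 le_rfl zero_le_one)
        (hgint 1 r zero_le_one hr1)).symm
    -- bound on the piece over [0,1]
    have hS1 : (∫ l in (0:ℝ)..(1:ℝ), Real.sinh l * (χ₁ l ^ p * l)) ≤ Real.sinh 1 * Cb ^ p := by
      have hmono := intervalIntegral.integral_mono_on zero_le_one (hgint 0 1 le_rfl zero_le_one)
        (_root_.intervalIntegrable_const (c := Real.sinh 1 * Cb ^ p)) ?_
      · simpa using hmono
      · intro x hx
        have hx0 : (0:ℝ) ≤ x := hx.1
        have hx1 : x ≤ 1 := hx.2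
        have hχx := hχpos x hx0
        have h1 : Real.sinh x ≤ Real.sinh 1 := Real.sinh_le_sinh.2 hx1
        have h2 : χ₁ x ^ p ≤ Cb ^ p := Real.rpow_le_rpow hχx.le (hχbd x hx0) (by linarith)
        have h3 : χ₁ x ^ p * x ≤ Cb ^ p * 1 := mul_le_mul h2 hx1 hx0 (by positivity)
        calc Real.sinh x * (χ₁ x ^ p * x) ≤ Real.sinh 1 * (Cb ^ p * 1) :=
              mul_le_mul h1 h3 (by positivity) (by positivity)
          _ = Real.sinh 1 * Cb ^ p := by ring
    have hS1nn : (0:ℝ) ≤ ∫ l in (0:ℝ)..(1:ℝ), Real.sinh l * (χ₁ l ^ p * l) := by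
      apply intervalIntegral.integral_nonneg zero_le_one
      intro x hx
      have hx0 : (0:ℝ) ≤ x := hx.1
      have := hχpos x hx0
      positivity
    -- bound on the piece over [1,r]
    have hS2 : (∫ l in (1:ℝ)..r, Real.sinh l * (χ₁ l ^ p * l))
        ≤ C ^ p / 2 * ∫ l in (1:ℝ)..r, Real.exp ((1 - δ * p) * l) := by
      rw [← intervalIntegral.integral_const_mul]
      apply intervalIntegral.integral_mono_on hr1 (hgint 1 r zero_le_one hr1)
        ((by fun_prop : Continuous fun l : ℝ =>
          C ^ p / 2 * Real.exp ((1 - δ * p) * l)).intervalIntegrable 1 r)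
      intro x hx
      have hx1 : (1:ℝ) ≤ x := hx.1
      have hx0 : (0:ℝ) ≤ x := by linarith
      have hsinh : Real.sinh x ≤ Real.exp x / 2 := by
        rw [Real.sinh_eq]; have := Real.exp_pos (-x); linarith
      have hkb := myKb χ₁ p C δ hp.le hχpos hC x hx1
      have hχx := hχpos x hx0
      calc Real.sinh x * (χ₁ x ^ p * x)
          ≤ Real.exp x / 2 * (C ^ p * Real.exp (-(δ * p) * x)) :=
            mul_le_mul hsinh hkb (by positivity) (by positivity)
        _ = C ^ p / 2 * Real.exp ((1 - δ * p) * x) := by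
            rw [show Real.exp x / 2 * (C ^ p * Real.exp (-(δ * p) * x))
              = C ^ p / 2 * (Real.exp x * Real.exp (-(δ * p) * x)) from by ring, ← Real.exp_add]
            congr 2; ring
    have hS2' : Real.exp (-r) * (∫ l in (1:ℝ)..r, Real.sinh l * (χ₁ l ^ p * l))
        ≤ C ^ p / 2 * (K * Real.exp (-B * r)) := by
      have hTr := hTK r hr1
      calc Real.exp (-r) * (∫ l in (1:ℝ)..r, Real.sinh l * (χ₁ l ^ p * l))
          ≤ Real.exp (-r) * (C ^ p / 2 * ∫ l in (1:ℝ)..r, Real.exp ((1 - δ * p) * l)) :=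
            mul_le_mul_of_nonneg_left hS2 (Real.exp_pos _).le
        _ = C ^ p / 2 * (Real.exp (-r) * ∫ l in (1:ℝ)..r, Real.exp ((1 - δ * p) * l)) := by ring
        _ ≤ C ^ p / 2 * (K * Real.exp (-B * r)) := mul_le_mul_of_nonneg_left hTr hKp0
    -- bound on the tail
    have hHnn : (0:ℝ) ≤ ∫ l in Ioi r, Real.exp (-l) * (χ₁ l ^ p * l) := by
      apply setIntegral_nonneg measurableSet_Ioi
      intro x hx
      simp only [mem_Ioi] at hx
      have hx0 : (0:ℝ) ≤ x := by linarith
      have := hχpos x hx0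
      positivity
    have hsinhr : Real.sinh r ≤ Real.exp r / 2 := by
      rw [Real.sinh_eq]; have := Real.exp_pos (-r); linarith
    have hI2' : Real.sinh r * (∫ l in Ioi r, Real.exp (-l) * (χ₁ l ^ p * l))
        ≤ C ^ p / 2 * Real.exp (-B * r) := by
      have h1 : Real.exp (-(δ * p) * r) ≤ Real.exp (-B * r) :=
        Real.exp_le_exp.2 (by nlinarith [mul_nonneg (sub_nonneg.2 hBp.le) hr0])
      have h2 : (1:ℝ) ≤ 1 + δ * p := by nlinarith
      calc Real.sinh r * (∫ l in Ioi r, Real.exp (-l) * (χ₁ l ^ p * l))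
          ≤ (Real.exp r / 2) * (C ^ p * (Real.exp (-(1 + δ * p) * r) / (1 + δ * p))) :=
            mul_le_mul hsinhr (hI2 r hr1) hHnn (by positivity)
        _ = C ^ p / 2 * (Real.exp r * Real.exp (-(1 + δ * p) * r)) / (1 + δ * p) := by ring
        _ = C ^ p / 2 * Real.exp (-(δ * p) * r) / (1 + δ * p) := by
            rw [← Real.exp_add, show r + -(1 + δ * p) * r = -(δ * p) * r from by ring]
        _ ≤ C ^ p / 2 * Real.exp (-B * r) := by
            rw [div_le_iff₀ (by positivity)]
            nlinarith [mul_le_mul_of_nonneg_left h1 hKp0,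
              mul_nonneg (mul_nonneg hKp0 (Real.exp_pos (-B * r)).le)
                (by positivity : (0:ℝ) ≤ δ * p)]
    have hexp_r : Real.exp (-r) ≤ Real.exp (-B * r) :=
      Real.exp_le_exp.2 (by nlinarith [mul_nonneg (sub_nonneg.2 hB1) hr0])
    have hS1' : Real.exp (-r) * (∫ l in (0:ℝ)..(1:ℝ), Real.sinh l * (χ₁ l ^ p * l))
        ≤ Real.sinh 1 * Cb ^ p * Real.exp (-B * r) := by
      calc Real.exp (-r) * (∫ l in (0:ℝ)..(1:ℝ), Real.sinh l * (χ₁ l ^ p * l))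
          ≤ Real.exp (-B * r) * (Real.sinh 1 * Cb ^ p) :=
            mul_le_mul hexp_r hS1 hS1nn (Real.exp_pos _).le
        _ = Real.sinh 1 * Cb ^ p * Real.exp (-B * r) := by ring
    rw [hrw, hsplit]
    have hfinal : Real.exp (-r) * ((∫ l in (0:ℝ)..(1:ℝ), Real.sinh l * (χ₁ l ^ p * l))
          + ∫ l in (1:ℝ)..r, Real.sinh l * (χ₁ l ^ p * l))
        + Real.sinh r * (∫ l in Ioi r, Real.exp (-l) * (χ₁ l ^ p * l))
        ≤ (Real.sinh 1 * Cb ^ p + C ^ p / 2 * K + C ^ p / 2) * Real.exp (-B * r) := by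
      have expand : Real.exp (-r) * ((∫ l in (0:ℝ)..(1:ℝ), Real.sinh l * (χ₁ l ^ p * l))
            + ∫ l in (1:ℝ)..r, Real.sinh l * (χ₁ l ^ p * l))
          = Real.exp (-r) * (∫ l in (0:ℝ)..(1:ℝ), Real.sinh l * (χ₁ l ^ p * l))
            + Real.exp (-r) * ∫ l in (1:ℝ)..r, Real.sinh l * (χ₁ l ^ p * l) := by ring
      rw [expand]
      linarith [hS1', hS2', hI2']
    have hpos2 : (0:ℝ) ≤ Cb * Real.exp 1 * Real.exp (-B * r) := by positivity
    nlinarith [mul_le_mul_of_nonneg_left hfinal hc.le]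

lemma mySharp (χ₁ : ℝ → ℝ) (p c Cb Cd δ₀ : ℝ)
    (hp : 1 < p) (hc : 0 < c) (hδ₀ : 0 < δ₀)
    (hχc : ContinuousOn χ₁ (Ici 0)) (hχpos : ∀ r ≥ (0:ℝ), 0 < χ₁ r)
    (hχbd : ∀ r ≥ (0:ℝ), χ₁ r ≤ Cb)
    (hrep : ∀ r > (0:ℝ), χ₁ r = c / r *
      ((∫ lam in (0:ℝ)..r, Real.exp (-r) * Real.sinh lam * (χ₁ lam ^ p) * lam)
        + ∫ lam in Ioi r, Real.sinh r * Real.exp (-lam) * (χ₁ lam ^ p) * lam))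
    (hdec : ∀ r > (0:ℝ), r * χ₁ r ≤ Cd * Real.exp (-δ₀ * r)) :
    ∃ C₁ > (0:ℝ), ∀ r > (0:ℝ), r * χ₁ r ≤ C₁ * Real.exp (-r) := by
  set q : ℝ := (1 + p) / 2 with hqdef
  have hq1 : 1 < q := by rw [hqdef]; linarith
  have hCd0 : 0 < Cd := by
    have h1 := hdec 1 one_pos
    have h2 := hχpos 1 zero_le_one
    nlinarith [Real.exp_pos (-δ₀ * 1)]
  have key : ∀ n : ℕ, ∃ C, ∀ r > (0:ℝ),
      r * χ₁ r ≤ C * Real.exp (-(min 1 (δ₀ * q ^ n)) * r) := by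
    intro n
    induction n with
    | zero =>
      refine ⟨Cd, fun r hr => (hdec r hr).trans ?_⟩
      have hm : min 1 (δ₀ * q ^ 0) ≤ δ₀ := by
        simp only [pow_zero, mul_one]
        exact min_le_right _ _
      have h2 : Real.exp (-δ₀ * r) ≤ Real.exp (-(min 1 (δ₀ * q ^ 0)) * r) :=
        Real.exp_le_exp.2 (by nlinarith [mul_nonneg (sub_nonneg.2 hm) hr.le])
      nlinarith [h2]
    | succ n ih =>
      obtain ⟨C, hC⟩ := ih
      have h0 : 0 < min 1 (δ₀ * q ^ n) := lt_min one_pos (by positivity)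
      obtain ⟨C', hC'⟩ := myStep χ₁ p c Cb hp hc hχc hχpos hχbd hrep h0 hC
      have e2 : min 1 (min 1 (δ₀ * q ^ n) * ((1 + p) / 2)) = min 1 (δ₀ * q ^ (n + 1)) := by
        rw [show (1 + p) / 2 = q from hqdef.symm,
          min_mul_of_nonneg _ _ (by positivity : (0:ℝ) ≤ q), one_mul, ← min_assoc,
          min_eq_left hq1.le, pow_succ, ← mul_assoc]
      refine ⟨C', fun r hr => ?_⟩
      have := hC' r hr
      rwa [e2] at this
  obtain ⟨n, hn⟩ := pow_unbounded_of_one_lt (1 / δ₀) hq1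
  obtain ⟨C, hC⟩ := key n
  have hmin : min 1 (δ₀ * q ^ n) = 1 := by
    apply min_eq_left
    rw [div_lt_iff₀ hδ₀] at hn
    nlinarith
  refine ⟨max C 1, lt_of_lt_of_le one_pos (le_max_right _ _), fun r hr => ?_⟩
  have := hC r hr
  rw [hmin] at this
  have : r * χ₁ r ≤ C * Real.exp (-1 * r) := this
  have h2 : C * Real.exp (-1 * r) ≤ max C 1 * Real.exp (-r) := by
    rw [show (-1 : ℝ) * r = -r from by ring]
    exact mul_le_mul_of_nonneg_right (le_max_left _ _) (Real.exp_pos _).le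
  linarith

set_option maxHeartbeats 1000000 in
theorem stmt19 (χ₁ : ℝ → ℝ) (p c Cb Cd δ₀ : ℝ)
    (hp : 1 < p) (hc : 0 < c) (hδ₀ : 0 < δ₀)
    (hχc : ContinuousOn χ₁ (Ici 0)) (hχpos : ∀ r ≥ (0:ℝ), 0 < χ₁ r)
    (hχbd : ∀ r ≥ (0:ℝ), χ₁ r ≤ Cb)
    (hrep : ∀ r > (0:ℝ), χ₁ r = c / r *
      ((∫ lam in (0:ℝ)..r, Real.exp (-r) * Real.sinh lam * (χ₁ lam ^ p) * lam)
        + ∫ lam in Ioi r, Real.sinh r * Real.exp (-lam) * (χ₁ lam ^ p) * lam))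
    (hdec : ∀ r > (0:ℝ), r * χ₁ r ≤ Cd * Real.exp (-δ₀ * r)) :
    (∃ C' : ℝ, ∀ r > (0:ℝ), r * χ₁ r ≤ C' * Real.exp (-(min 1 (δ₀ * p)) * r)) ∧
      ∃ C₀ > (0:ℝ), ∀ δ > (0:ℝ),
        (fun r => r * χ₁ r - C₀ * Real.exp (-r)) =O[atTop]
          (fun r => Real.exp (-(p - δ) * r)) := by
  obtain ⟨C₁, hC₁0, hC₁⟩ := mySharp χ₁ p c Cb Cd δ₀ hp hc hδ₀ hχc hχpos hχbd hrep hdec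
  have hC₁' : ∀ r > (0:ℝ), r * χ₁ r ≤ C₁ * Real.exp (-1 * r) := by
    intro r hr
    rw [show (-1 : ℝ) * r = -r from by ring]
    exact hC₁ r hr
  have hCb0 : 0 < Cb := lt_of_lt_of_le (hχpos 0 le_rfl) (hχbd 0 le_rfl)
  have hp1 : (0:ℝ) < p - 1 := by linarith
  constructor
  · -- part 1
    refine ⟨C₁, fun r hr => (hC₁ r hr).trans ?_⟩
    have hm : min 1 (δ₀ * p) ≤ 1 := min_le_left _ _
    have h2 : Real.exp (-r) ≤ Real.exp (-(min 1 (δ₀ * p)) * r) :=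
      Real.exp_le_exp.2 (by nlinarith [mul_nonneg (sub_nonneg.2 hm) hr.le])
    nlinarith [h2]
  · -- part 2
    set M : ℝ := Real.sinh 1 * Cb ^ p * Real.exp (p - 1) + C₁ ^ p / 2 with hMdef
    have hM0 : 0 < M := by positivity
    -- pointwise bound for the sinh-integrand on (0, ∞)
    have hgle : ∀ l : ℝ, 0 < l →
        Real.sinh l * (χ₁ l ^ p * l) ≤ M * Real.exp (-(p - 1) * l) := by
      intro l hl
      have hl0 : (0:ℝ) ≤ l := hl.le
      have hχl := hχpos l hl0
      rcases le_total l 1 with h1 | h1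
      · have hb1 : Real.sinh l * (χ₁ l ^ p * l) ≤ Real.sinh 1 * Cb ^ p := by
          calc Real.sinh l * (χ₁ l ^ p * l) ≤ Real.sinh 1 * (Cb ^ p * 1) :=
              mul_le_mul (Real.sinh_le_sinh.2 h1)
                (mul_le_mul (Real.rpow_le_rpow hχl.le (hχbd l hl0) (by linarith)) h1 hl0
                  (by positivity))
                (by positivity) (by positivity)
            _ = Real.sinh 1 * Cb ^ p := by ring
        have he : Real.exp (p - 1) * Real.exp (-(p - 1) * l) = Real.exp ((p - 1) * (1 - l)) := by
          rw [← Real.exp_add]; ring_nf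
        have h2 : (1:ℝ) ≤ Real.exp (p - 1) * Real.exp (-(p - 1) * l) := by
          rw [he]; exact Real.one_le_exp (by nlinarith)
        rw [hMdef]
        nlinarith [mul_le_mul_of_nonneg_left h2
            (by positivity : (0:ℝ) ≤ Real.sinh 1 * Cb ^ p),
          mul_nonneg (by positivity : (0:ℝ) ≤ C₁ ^ p / 2) (Real.exp_pos (-(p - 1) * l)).le,
          hb1]
      · have hsinh : Real.sinh l ≤ Real.exp l / 2 := by
          rw [Real.sinh_eq]; have := Real.exp_pos (-l); linarith
        have hkb := myKb χ₁ p C₁ 1 hp.le hχpos hC₁' l h1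
        have hstep : Real.sinh l * (χ₁ l ^ p * l)
            ≤ Real.exp l / 2 * (C₁ ^ p * Real.exp (-(1 * p) * l)) :=
          mul_le_mul hsinh hkb (by positivity) (by positivity)
        have heq : Real.exp l / 2 * (C₁ ^ p * Real.exp (-(1 * p) * l))
            = C₁ ^ p / 2 * Real.exp (-(p - 1) * l) := by
          rw [show Real.exp l / 2 * (C₁ ^ p * Real.exp (-(1 * p) * l))
            = C₁ ^ p / 2 * (Real.exp l * Real.exp (-(1 * p) * l)) from by ring, ← Real.exp_add]
          congr 2; ring
        have hle2 : C₁ ^ p / 2 * Real.exp (-(p - 1) * l) ≤ M * Real.exp (-(p - 1) * l) := by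
          apply mul_le_mul_of_nonneg_right ?_ (Real.exp_pos _).le
          rw [hMdef]
          nlinarith [mul_pos (mul_pos (Real.sinh_pos_iff.2 one_pos) (Real.rpow_pos_of_pos hCb0 p))
            (Real.exp_pos (p - 1))]
        exact hstep.trans (heq.le.trans hle2)
    -- continuity and integrability of the sinh-integrand
    have hFc : ContinuousOn (fun l => χ₁ l ^ p) (Ici 0) :=
      hχc.rpow_const (fun x hx => Or.inl (hχpos x hx).ne')
    have hgc : ContinuousOn (fun l => Real.sinh l * (χ₁ l ^ p * l)) (Ici 0) :=
      Real.continuous_sinh.continuousOn.mul (hFc.mul continuous_id.continuousOn)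
    have hgnn : ∀ l : ℝ, 0 ≤ l → 0 ≤ Real.sinh l * (χ₁ l ^ p * l) := by
      intro l hl
      have := hχpos l hl
      positivity
    have hgint : IntegrableOn (fun l => Real.sinh l * (χ₁ l ^ p * l)) (Ioi 0) := by
      apply Integrable.mono' ((exp_neg_integrableOn_Ioi 0 hp1).const_mul M)
        ((hgc.mono Ioi_subset_Ici_self).aestronglyMeasurable measurableSet_Ioi)
      filter_upwards [ae_restrict_mem measurableSet_Ioi] with l hl
      simp only [mem_Ioi] at hl
      rw [Real.norm_eq_abs, abs_of_nonneg (hgnn l hl.le)]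
      exact hgle l hl
    -- positivity of the full integral
    have hint12 : IntervalIntegrable (fun l => Real.sinh l * (χ₁ l ^ p * l)) volume 1 2 := by
      apply (hgc.mono ?_).intervalIntegrable
      rw [uIcc_of_le one_le_two]
      exact fun x hx => le_trans zero_le_one hx.1
    have h12 : (0:ℝ) < ∫ l in (1:ℝ)..2, Real.sinh l * (χ₁ l ^ p * l) := by
      apply intervalIntegral.intervalIntegral_pos_of_pos_on hint12 ?_ one_lt_two
      intro x hx
      have hx0 : (0:ℝ) < x := lt_trans one_pos hx.1
      have := hχpos x hx0.le
      have hs := Real.sinh_pos_iff.2 hx0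
      positivity
    have hGpos : 0 < ∫ l in Ioi 0, Real.sinh l * (χ₁ l ^ p * l) := by
      have hsub : (∫ l in (1:ℝ)..2, Real.sinh l * (χ₁ l ^ p * l))
          ≤ ∫ l in Ioi 0, Real.sinh l * (χ₁ l ^ p * l) := by
        rw [intervalIntegral.integral_of_le one_le_two]
        apply setIntegral_mono_set hgint
        · filter_upwards [ae_restrict_mem measurableSet_Ioi] with l hl
          simp only [mem_Ioi] at hl
          exact hgnn l hl.le
        · exact HasSubset.Subset.eventuallyLE
            (Ioc_subset_Ioi_self.trans (Ioi_subset_Ioi zero_le_one))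
      linarith
    refine ⟨c * ∫ l in Ioi 0, Real.sinh l * (χ₁ l ^ p * l), mul_pos hc hGpos, fun δ hδ => ?_⟩
    rw [Asymptotics.isBigO_iff]
    refine ⟨c * C₁ ^ p / 2 + c * M / (p - 1), ?_⟩
    filter_upwards [Filter.eventually_ge_atTop 1] with r hr
    have hr0 : (0:ℝ) < r := lt_of_lt_of_le one_pos hr
    -- representation
    have e1 : (∫ lam in (0:ℝ)..r, Real.exp (-r) * Real.sinh lam * (χ₁ lam ^ p) * lam)
        = Real.exp (-r) * ∫ l in (0:ℝ)..r, Real.sinh l * (χ₁ l ^ p * l) := by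
      simp only [mul_assoc]
      exact intervalIntegral.integral_const_mul _ _
    have e2 : (∫ lam in Ioi r, Real.sinh r * Real.exp (-lam) * (χ₁ lam ^ p) * lam)
        = Real.sinh r * ∫ l in Ioi r, Real.exp (-l) * (χ₁ l ^ p * l) := by
      simp only [mul_assoc]
      exact MeasureTheory.integral_const_mul _ _
    have hrw : r * χ₁ r = c * (Real.exp (-r) * (∫ l in (0:ℝ)..r, Real.sinh l * (χ₁ l ^ p * l))
        + Real.sinh r * ∫ l in Ioi r, Real.exp (-l) * (χ₁ l ^ p * l)) := by
      rw [hrep r hr0, e1, e2]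
      field_simp
    have hioc : (∫ l in (0:ℝ)..r, Real.sinh l * (χ₁ l ^ p * l))
        = ∫ l in Ioc 0 r, Real.sinh l * (χ₁ l ^ p * l) :=
      intervalIntegral.integral_of_le hr0.le
    have hsplitG : (∫ l in Ioi 0, Real.sinh l * (χ₁ l ^ p * l))
        = (∫ l in Ioc 0 r, Real.sinh l * (χ₁ l ^ p * l))
          + ∫ l in Ioi r, Real.sinh l * (χ₁ l ^ p * l) := by
      rw [← setIntegral_union (Ioc_disjoint_Ioi le_rfl) measurableSet_Ioi
        (hgint.mono_set Ioc_subset_Ioi_self) (hgint.mono_set (Ioi_subset_Ioi hr0.le)),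
        Ioc_union_Ioi_eq_Ioi hr0.le]
    have hdiff : r * χ₁ r - (c * ∫ l in Ioi 0, Real.sinh l * (χ₁ l ^ p * l)) * Real.exp (-r)
        = c * (Real.sinh r * (∫ l in Ioi r, Real.exp (-l) * (χ₁ l ^ p * l))
          - Real.exp (-r) * ∫ l in Ioi r, Real.sinh l * (χ₁ l ^ p * l)) := by
      rw [hrw, hsplitG, hioc]; ring
    -- bound the two tail terms
    have hHnn : (0:ℝ) ≤ ∫ l in Ioi r, Real.exp (-l) * (χ₁ l ^ p * l) := by
      apply setIntegral_nonneg measurableSet_Ioi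
      intro x hx
      simp only [mem_Ioi] at hx
      have hx0 : (0:ℝ) ≤ x := by linarith
      have := hχpos x hx0
      positivity
    have hGrnn : (0:ℝ) ≤ ∫ l in Ioi r, Real.sinh l * (χ₁ l ^ p * l) := by
      apply setIntegral_nonneg measurableSet_Ioi
      intro x hx
      simp only [mem_Ioi] at hx
      exact hgnn x (by linarith)
    have hsinhr : Real.sinh r ≤ Real.exp r / 2 := by
      rw [Real.sinh_eq]; have := Real.exp_pos (-r); linarith
    have hsinhr0 : (0:ℝ) ≤ Real.sinh r := by positivity
    have hb1 : Real.sinh r * (∫ l in Ioi r, Real.exp (-l) * (χ₁ l ^ p * l))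
        ≤ C₁ ^ p / 2 * Real.exp (-p * r) := by
      have htail := myTail χ₁ p C₁ 1 hp.le one_pos hχpos hC₁' hC₁0 r hr
      calc Real.sinh r * (∫ l in Ioi r, Real.exp (-l) * (χ₁ l ^ p * l))
          ≤ (Real.exp r / 2) * (C₁ ^ p * (Real.exp (-(1 + 1 * p) * r) / (1 + 1 * p))) :=
            mul_le_mul hsinhr htail hHnn (by positivity)
        _ = C₁ ^ p / 2 * (Real.exp r * Real.exp (-(1 + 1 * p) * r)) / (1 + 1 * p) := by ring
        _ = C₁ ^ p / 2 * Real.exp (-p * r) / (1 + 1 * p) := by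
            rw [← Real.exp_add, show r + -(1 + 1 * p) * r = -p * r from by ring]
        _ ≤ C₁ ^ p / 2 * Real.exp (-p * r) := by
            rw [div_le_iff₀ (by positivity)]
            nlinarith [mul_nonneg (by positivity : (0:ℝ) ≤ C₁ ^ p / 2 * Real.exp (-p * r))
              (by positivity : (0:ℝ) ≤ 1 * p)]
    have hb2 : Real.exp (-r) * (∫ l in Ioi r, Real.sinh l * (χ₁ l ^ p * l))
        ≤ M / (p - 1) * Real.exp (-p * r) := by
      have hint : Integrable (fun l => M * Real.exp (-(p - 1) * l))
          (volume.restrict (Ioi r)) := (exp_neg_integrableOn_Ioi r hp1).const_mul _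
      have hmono := integral_mono_of_nonneg (μ := volume.restrict (Ioi r))
        (f := fun l => Real.sinh l * (χ₁ l ^ p * l))
        (g := fun l => M * Real.exp (-(p - 1) * l)) ?_ hint ?_
      · have hval : (∫ l in Ioi r, M * Real.exp (-(p - 1) * l))
            = M * (Real.exp (-(p - 1) * r) / (p - 1)) := by
          rw [MeasureTheory.integral_const_mul, myIntExp hp1]
        have h3 : (∫ l in Ioi r, Real.sinh l * (χ₁ l ^ p * l))
            ≤ M * (Real.exp (-(p - 1) * r) / (p - 1)) := by
          rw [← hval]; exact hmono
        calc Real.exp (-r) * (∫ l in Ioi r, Real.sinh l * (χ₁ l ^ p * l))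
            ≤ Real.exp (-r) * (M * (Real.exp (-(p - 1) * r) / (p - 1))) :=
              mul_le_mul_of_nonneg_left h3 (Real.exp_pos _).le
          _ = M / (p - 1) * (Real.exp (-r) * Real.exp (-(p - 1) * r)) := by ring
          _ = M / (p - 1) * Real.exp (-p * r) := by
              rw [← Real.exp_add, show -r + -(p - 1) * r = -p * r from by ring]
      · filter_upwards [ae_restrict_mem measurableSet_Ioi] with l hl
        simp only [mem_Ioi] at hl
        simp only [Pi.zero_apply]
        exact hgnn l (by linarith)
      · filter_upwards [ae_restrict_mem measurableSet_Ioi] with l hl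
        simp only [mem_Ioi] at hl
        exact hgle l (by linarith)
    -- conclude
    have habs : |r * χ₁ r - (c * ∫ l in Ioi 0, Real.sinh l * (χ₁ l ^ p * l)) * Real.exp (-r)|
        ≤ c * C₁ ^ p / 2 * Real.exp (-p * r) + c * M / (p - 1) * Real.exp (-p * r) := by
      rw [hdiff, abs_mul, abs_of_pos hc]
      have h4 := abs_sub (Real.sinh r * (∫ l in Ioi r, Real.exp (-l) * (χ₁ l ^ p * l)))
        (Real.exp (-r) * ∫ l in Ioi r, Real.sinh l * (χ₁ l ^ p * l))
      have h5 : |Real.sinh r * (∫ l in Ioi r, Real.exp (-l) * (χ₁ l ^ p * l))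
          - Real.exp (-r) * ∫ l in Ioi r, Real.sinh l * (χ₁ l ^ p * l)|
          ≤ C₁ ^ p / 2 * Real.exp (-p * r) + M / (p - 1) * Real.exp (-p * r) := by
        rw [abs_le]
        constructor
        · have := mul_nonneg hsinhr0 hHnn
          have := mul_nonneg (Real.exp_pos (-r)).le hGrnn
          nlinarith [hb1, hb2]
        · have := mul_nonneg hsinhr0 hHnn
          have := mul_nonneg (Real.exp_pos (-r)).le hGrnn
          nlinarith [hb1, hb2]
      exact le_trans (mul_le_mul_of_nonneg_left h5 hc.le) (le_of_eq (by ring))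
    rw [Real.norm_eq_abs, Real.norm_eq_abs, abs_of_pos (Real.exp_pos _)]
    have hexp : Real.exp (-p * r) ≤ Real.exp (-(p - δ) * r) :=
      Real.exp_le_exp.2 (by nlinarith [mul_nonneg hδ.le hr0.le])
    have hcc : (0:ℝ) ≤ c * C₁ ^ p / 2 + c * M / (p - 1) := by positivity
    calc |r * χ₁ r - (c * ∫ l in Ioi 0, Real.sinh l * (χ₁ l ^ p * l)) * Real.exp (-r)|
        ≤ (c * C₁ ^ p / 2 + c * M / (p - 1)) * Real.exp (-p * r) := by
          rw [add_mul]; linarith [habs]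
      _ ≤ (c * C₁ ^ p / 2 + c * M / (p - 1)) * Real.exp (-(p - δ) * r) :=
          mul_le_mul_of_nonneg_left hexp hcc
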